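/- arXiv:1911.11682 — 5 statements merged into one kernel-verified Lean document; each statement's English description precedes it below -/
import Mathlib

section
/- Every autoequivalence of the simplex category Δ is naturally isomorphic either to the identity functor or to the duality functor D, and these two are not naturally isomorphic to each other. Consequently the group of isomorphism classes of autoequivalences of Δ has exactly two elements. -/
open CategoryTheory

/-- The duality functor `D : Δ ⥤ Δ`, with `D [n] = [n]` and `D f (i) = m - f (n - i)`. -/
def SimplexDual : SimplexCategory ⥤ SimplexCategory where
  obj a := a
  map {a b} f := SimplexCategory.Hom.mk
    ⟨fun i => (f.toOrderHom i.rev).rev,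
      fun i j hij => Fin.rev_le_rev.2 (f.toOrderHom.monotone (Fin.rev_le_rev.2 hij))⟩
  map_id a := by
    apply SimplexCategory.Hom.ext
    ext i
    simp
  map_comp {a b c} f g := by
    apply SimplexCategory.Hom.ext
    ext i
    exact congrArg (fun x => (Fin.rev (g.toOrderHom x) : ℕ)) (Fin.rev_rev _).symm

open Limits SimplexCategory Simplicial

/-- `D ⋙ D ≅ 𝟭`. -/
def dualInvolution : SimplexDual ⋙ SimplexDual ≅ 𝟭 SimplexCategory :=
  NatIso.ofComponents (fun x => Iso.refl x) (by
    intro x y f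
    apply SimplexCategory.Hom.ext
    ext i
    simp [SimplexDual]
    show ((Hom.toOrderHom f i.rev.rev).rev.rev : ℕ) = _
    simp
    rfl)

/-- Duality as an equivalence. -/
def dualEquiv : SimplexCategory ≌ SimplexCategory :=
  CategoryTheory.Equivalence.mk SimplexDual SimplexDual dualInvolution.symm dualInvolution

lemma dual_const (i : Fin 2) :
    SimplexDual.map (SimplexCategory.const ⦋0⦌ ⦋1⦌ i) = SimplexCategory.const ⦋0⦌ ⦋1⦌ i.rev := by
  apply SimplexCategory.Hom.ext
  ext j
  rfl

def zeroIsTerminalAux : IsTerminal (⦋0⦌ : SimplexCategory) :=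
  IsTerminal.ofUniqueHom (fun x => x.const ⦋0⦌ 0) (fun x m => eq_const_to_zero m)

/-- Homs out of `⦋0⦌` count the elements. -/
def homZeroEquiv (x : SimplexCategory) : ((⦋0⦌ : SimplexCategory) ⟶ x) ≃ Fin (x.len + 1) where
  toFun f := f.toOrderHom 0
  invFun i := SimplexCategory.const _ x i
  left_inv f := (eq_const_of_zero f).symm
  right_inv _ := rfl

theorem objs_fixed (E : SimplexCategory ⥤ SimplexCategory) [E.IsEquivalence] :
    ∀ x, E.obj x = x := by
  have h0 : E.obj (⦋0⦌ : SimplexCategory) = (⦋0⦌ : SimplexCategory) :=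
    SimplexCategory.skeletal
      ⟨(IsTerminal.isTerminalObj E _ zeroIsTerminalAux).uniqueUpToIso zeroIsTerminalAux⟩
  intro x
  have ff : Functor.FullyFaithful E := Functor.FullyFaithful.ofFullyFaithful E
  have e : Fin (x.len + 1) ≃ Fin ((E.obj x).len + 1) :=
    ((homZeroEquiv x).symm.trans ((ff.homEquiv.trans
      (Equiv.cast (by rw [h0]))).trans (homZeroEquiv (E.obj x))))
  apply (SimplexCategory.ext _).symm
  simpa using Fin.equiv_iff_eq.mp ⟨e⟩

/-- `E` transported to a functor fixing objects, on homs. -/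
def Em (E : SimplexCategory ⥤ SimplexCategory) (h : ∀ x, E.obj x = x)
    {x y : SimplexCategory} (f : x ⟶ y) : x ⟶ y :=
  eqToHom (h x).symm ≫ E.map f ≫ eqToHom (h y)

theorem iso_id_of (E : SimplexCategory ⥤ SimplexCategory) [E.IsEquivalence]
    (h : ∀ x, E.obj x = x)
    (h1 : Em E h (SimplexCategory.const ⦋0⦌ ⦋1⦌ 0) = SimplexCategory.const ⦋0⦌ ⦋1⦌ 0) :
    Nonempty (E ≅ 𝟭 SimplexCategory) := by
  have Em_comp : ∀ {x y z : SimplexCategory} (f : x ⟶ y) (g : y ⟶ z),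
      Em E h (f ≫ g) = Em E h f ≫ Em E h g := by
    intro x y z f g
    simp [Em]
  have Em_inj : ∀ {x y : SimplexCategory} (f g : x ⟶ y), Em E h f = Em E h g → f = g := by
    intro x y f g hfg
    simp only [Em] at hfg
    apply E.map_injective
    rw [← cancel_epi (eqToHom (h x).symm), ← cancel_mono (eqToHom (h y))]
    simpa using hfg
  -- the permutation of points induced by E
  set φ : ∀ (x : SimplexCategory), Fin (x.len + 1) → Fin (x.len + 1) :=
    fun x i => (Em E h (SimplexCategory.const ⦋0⦌ x i)).toOrderHom 0 with hφ
  have Em_const : ∀ (x : SimplexCategory) (i : Fin (x.len + 1)),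
      Em E h (SimplexCategory.const ⦋0⦌ x i) = SimplexCategory.const ⦋0⦌ x (φ x i) :=
    fun x i => eq_const_of_zero _
  have φ_inj : ∀ x, Function.Injective (φ x) := by
    intro x i j hij
    have := Em_inj _ _ ((Em_const x i).trans (by rw [hij, ← Em_const]))
    have := congrArg (fun f => SimplexCategory.Hom.toOrderHom f 0) this
    simpa using this
  have φ1_0 : φ ⦋1⦌ 0 = 0 := by
    have := congrArg (fun f => SimplexCategory.Hom.toOrderHom f 0) ((Em_const ⦋1⦌ 0).symm.trans h1)
    simpa using this
  have φ1_1 : φ ⦋1⦌ 1 = 1 := by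
    have h2 : φ ⦋1⦌ 1 ≠ 0 := fun hc => by
      have := φ_inj ⦋1⦌ (hc.trans φ1_0.symm)
      exact absurd this (by decide)
    have h3 : ((φ ⦋1⦌ 1) : ℕ) ≠ 0 := fun hh => h2 (Fin.ext hh)
    have h4 : ((φ ⦋1⦌ 1) : ℕ) < 2 := by simpa using (φ ⦋1⦌ 1).is_lt
    apply Fin.ext
    have h5 : ((1 : Fin (SimplexCategory.len ⦋1⦌ + 1)) : ℕ) = 1 := rfl
    omega
  have Em_const1 : ∀ (i : Fin 2), Em E h (SimplexCategory.const ⦋0⦌ ⦋1⦌ i)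
      = SimplexCategory.const ⦋0⦌ ⦋1⦌ i := by
    intro i
    match i with
    | 0 => rw [Em_const, φ1_0]
    | 1 => rw [Em_const, φ1_1]
  have φ_mono : ∀ x, Monotone (φ x) := by
    intro x i j hij
    have key : ∀ (k : Fin 2), φ x ((mkOfLe i j hij).toOrderHom k)
        = (Em E h (mkOfLe i j hij)).toOrderHom k := by
      intro k
      have c1 : SimplexCategory.const ⦋0⦌ ⦋1⦌ k ≫ mkOfLe i j hij
          = SimplexCategory.const ⦋0⦌ x ((mkOfLe i j hij).toOrderHom k) := const_comp _ _ _
      have h5 : SimplexCategory.const ⦋0⦌ ⦋1⦌ k ≫ Em E h (mkOfLe i j hij)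
          = Em E h (SimplexCategory.const ⦋0⦌ x ((mkOfLe i j hij).toOrderHom k)) := by
        rw [← Em_const1 k, ← Em_comp, c1]
      rw [Em_const x ((mkOfLe i j hij).toOrderHom k), const_comp] at h5
      have h6 := congrArg (fun f => SimplexCategory.Hom.toOrderHom f 0) h5
      exact (h6 : _ = _).symm
    have k0 := key 0
    have k1 := key 1
    have h01 : (mkOfLe i j hij).toOrderHom 0 = i := rfl
    have h11 : (mkOfLe i j hij).toOrderHom 1 = j := rfl
    rw [h01] at k0; rw [h11] at k1
    rw [k0, k1]
    exact (Em E h (mkOfLe i j hij)).toOrderHom.monotone (by decide : (0 : Fin 2) ≤ 1)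
  have φ_id : ∀ x (i : Fin (x.len + 1)), φ x i = i := by
    intro x
    have hsm : StrictMono (φ x) := (φ_mono x).strictMono_of_injective (φ_inj x)
    haveI : WellFoundedLT (Fin (x.len + 1)) := Finite.to_wellFoundedLT
    have hr : Set.range (φ x) = Set.range (id : Fin (x.len+1) → Fin (x.len+1)) := by
      rw [Set.range_id]
      exact Set.range_eq_univ.mpr (Finite.surjective_of_injective (φ_inj x))
    have := (hsm.range_inj strictMono_id).mp hr
    exact fun i => congrFun this i
  have Em_eq : ∀ {x y : SimplexCategory} (f : x ⟶ y), Em E h f = f := by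
    intro x y f
    apply SimplexCategory.Hom.ext
    ext i
    have c1 : SimplexCategory.const ⦋0⦌ x i ≫ f
        = SimplexCategory.const ⦋0⦌ y (f.toOrderHom i) := const_comp _ _ _
    have h5 : SimplexCategory.const ⦋0⦌ x i ≫ Em E h f
        = SimplexCategory.const ⦋0⦌ y ((Em E h f).toOrderHom i) := const_comp _ _ _
    have h6 : SimplexCategory.const ⦋0⦌ x i ≫ Em E h f
        = SimplexCategory.const ⦋0⦌ y (f.toOrderHom i) := by
      conv_lhs => rw [show SimplexCategory.const ⦋0⦌ x i
          = Em E h (SimplexCategory.const ⦋0⦌ x i) by rw [Em_const, φ_id]]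
      rw [← Em_comp, c1, Em_const, φ_id]
    have h7 := h5.symm.trans h6
    exact congrArg (fun g => ((SimplexCategory.Hom.toOrderHom g 0 : Fin (y.len + 1)) : ℕ)) h7
  exact ⟨NatIso.ofComponents (fun x => eqToIso (h x)) (by
    intro x y f
    have h6 := Em_eq f
    simp only [Em] at h6
    conv_rhs => rw [← h6]
    simp)⟩

/-- Every autoequivalence of the simplex category `Δ` is naturally isomorphic either to the
identity functor or to the duality functor, these two are not naturally isomorphic to each
other, and the duality functor is itself an equivalence; hence the group of isomorphism
classes of autoequivalences of `Δ` has exactly two elements. -/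
theorem stmt0 :
    (∀ E : SimplexCategory ⥤ SimplexCategory, E.IsEquivalence →
        (Nonempty (E ≅ 𝟭 SimplexCategory) ∨ Nonempty (E ≅ SimplexDual))) ∧
      SimplexDual.IsEquivalence ∧
      IsEmpty (𝟭 SimplexCategory ≅ SimplexDual) := by
  have hDeq : SimplexDual.IsEquivalence := dualEquiv.isEquivalence_functor
  refine ⟨?_, hDeq, ?_⟩
  · intro E hE
    have h := objs_fixed E
    set c : (⦋0⦌ : SimplexCategory) ⟶ ⦋1⦌ := Em E h (SimplexCategory.const ⦋0⦌ ⦋1⦌ 0) with hc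
    have hcc : c = SimplexCategory.const ⦋0⦌ ⦋1⦌ (c.toOrderHom 0) := eq_const_of_zero c
    by_cases hv : c.toOrderHom 0 = 0
    · left
      exact iso_id_of E h (by rw [← hc, hcc, hv])
    · right
      have hv1 : c.toOrderHom 0 = 1 := by
        have h3 : ((c.toOrderHom 0) : ℕ) ≠ 0 := fun hh => hv (Fin.ext hh)
        have h4 : ((c.toOrderHom 0) : ℕ) < 2 := by simpa using (c.toOrderHom 0).is_lt
        apply Fin.ext
        have h5 : ((1 : Fin (SimplexCategory.len ⦋1⦌ + 1)) : ℕ) = 1 := rfl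
        omega
      haveI := hDeq
      set F := E ⋙ SimplexDual with hF
      haveI : F.IsEquivalence := inferInstance
      have hF' : ∀ x, F.obj x = x := h
      have hcond : Em F hF' (SimplexCategory.const ⦋0⦌ ⦋1⦌ 0)
          = SimplexCategory.const ⦋0⦌ ⦋1⦌ 0 := by
        have hcalc : Em F hF' (SimplexCategory.const ⦋0⦌ ⦋1⦌ 0) = SimplexDual.map c := by
          rw [hc]
          simp only [Em, hF, Functor.comp_map, Functor.map_comp, eqToHom_map]
          rfl
        rw [hcalc, hcc, hv1, dual_const]
        rfl
      obtain ⟨β⟩ := iso_id_of F hF' hcond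
      exact ⟨E.rightUnitor.symm ≪≫ Functor.isoWhiskerLeft E dualInvolution.symm ≪≫
        (Functor.associator E SimplexDual SimplexDual).symm ≪≫
        Functor.isoWhiskerRight β SimplexDual ≪≫ SimplexDual.leftUnitor⟩
  · constructor
    intro α
    have hid : α.hom.app ⦋1⦌ = 𝟙 _ := @SimplexCategory.eq_id_of_isIso _ _ (Iso.isIso_hom (α.app ⦋1⦌))
    have hid0 : α.hom.app ⦋0⦌ = 𝟙 _ := @SimplexCategory.eq_id_of_isIso _ _ (Iso.isIso_hom (α.app ⦋0⦌))
    have hn := α.hom.naturality (SimplexCategory.const ⦋0⦌ ⦋1⦌ 0)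
    rw [hid, hid0] at hn
    simp only [Functor.id_map, Category.comp_id, Category.id_comp] at hn
    rw [dual_const] at hn
    have h2 := congrArg (fun f => SimplexCategory.Hom.toOrderHom f 0) hn
    have h3 : (0 : Fin 2) = Fin.rev 0 := h2
    exact absurd h3 (by decide)
end

section
/- Let C be a category with pullbacks and let p: X → Y be a right fibration of simplicial objects in C. If Y satisfies the Segal condition, then X satisfies the Segal condition. -/
open CategoryTheory CategoryTheory.Limits Opposite

/-- The morphism `[0] ⟶ [m]` in `Δ` picking out the vertex `i`. -/
def pt (m : ℕ) (i : Fin (m + 1)) : SimplexCategory.mk 0 ⟶ SimplexCategory.mk m :=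
  SimplexCategory.Hom.mk ⟨fun _ => i, fun _ _ _ => le_refl _⟩

/-- The morphism `[1] ⟶ [m]` in `Δ` picking out the edge from `a` to `b` (for `a ≤ b`). -/
def edge (m : ℕ) (a b : Fin (m + 1)) (hab : a ≤ b) :
    SimplexCategory.mk 1 ⟶ SimplexCategory.mk m :=
  SimplexCategory.Hom.mk
    ⟨fun t => if (t : ℕ) = 0 then a else b, by
      intro s t hst
      have hst' : (s : ℕ) ≤ (t : ℕ) := hst
      dsimp only
      by_cases hs : (s : ℕ) = 0
      · by_cases ht : (t : ℕ) = 0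
        · simp [hs, ht]
        · simp [hs, ht, hab]
      · have ht : ¬(t : ℕ) = 0 := by omega
        simp [hs, ht]⟩

/-- A map `p : X ⟶ Y` of simplicial objects is a right fibration if for every `n ≥ 1` the
square with corners `Xₙ, X₀, Yₙ, Y₀` induced by the inclusion `{n} ⊆ [n]` is a pullback. -/
def IsRightFibration {C : Type*} [Category C] {X Y : SimplexCategoryᵒᵖ ⥤ C} (p : X ⟶ Y) :
    Prop :=
  ∀ m : ℕ,
    IsPullback (X.map (pt (m + 1) (Fin.last (m + 1))).op)
      (p.app (op (SimplexCategory.mk (m + 1)))) (p.app (op (SimplexCategory.mk 0)))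
      (Y.map (pt (m + 1) (Fin.last (m + 1))).op)

/-- A simplicial object `Z` satisfies the Segal condition if for every `n ≥ 2` the square
with corners `Zₙ, Z₁, Z_{n-1}, Z₀` induced by the inclusions `{n-1 < n} ⊆ [n]`,
`{0 < ⋯ < n-1} ⊆ [n]` and `{n-1}` into both, is a pullback square. -/
def SatisfiesSegal {C : Type*} [Category C] (Z : SimplexCategoryᵒᵖ ⥤ C) : Prop :=
  ∀ m : ℕ,
    IsPullback
      (Z.map (edge (m + 2) ⟨m + 1, by omega⟩ ⟨m + 2, by omega⟩ (by
        exact Fin.mk_le_mk.mpr (by omega))).op)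
      (Z.map (SimplexCategory.δ (Fin.last (m + 2))).op)
      (Z.map (pt 1 0).op)
      (Z.map (pt (m + 1) (Fin.last (m + 1))).op)

lemma pt_comp_edge_one (m : ℕ) (a b : Fin (m + 1)) (hab : a ≤ b) :
    pt 1 (Fin.last 1) ≫ edge m a b hab = pt m b := by
  apply SimplexCategory.Hom.ext
  apply OrderHom.ext
  funext t
  simp [pt, edge, SimplexCategory.Hom.comp, SimplexCategory.Hom.toOrderHom_mk, Fin.last]
  rfl

lemma pt_comp_edge_zero (m : ℕ) (a b : Fin (m + 1)) (hab : a ≤ b) :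
    pt 1 0 ≫ edge m a b hab = pt m a := by
  apply SimplexCategory.Hom.ext
  apply OrderHom.ext
  funext t
  simp [pt, edge, SimplexCategory.Hom.comp, SimplexCategory.Hom.toOrderHom_mk]
  rfl

lemma pt_comp_delta (m : ℕ) :
    pt (m + 1) (Fin.last (m + 1)) ≫ SimplexCategory.δ (Fin.last (m + 2)) =
      pt (m + 2) ⟨m + 1, by omega⟩ := by
  apply SimplexCategory.Hom.ext
  apply OrderHom.ext
  funext t
  simp [pt, SimplexCategory.δ, SimplexCategory.Hom.comp, SimplexCategory.Hom.toOrderHom_mk,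
    Fin.succAbove, Fin.last]
  rfl

/-- If `p : X ⟶ Y` is a right fibration of simplicial objects in a category with pullbacks
and `Y` satisfies the Segal condition, then `X` satisfies the Segal condition. -/
theorem stmt2 {C : Type*} [Category C] [HasPullbacks C]
    {X Y : SimplexCategoryᵒᵖ ⥤ C} (p : X ⟶ Y)
    (hp : IsRightFibration p) (hY : SatisfiesSegal Y) : SatisfiesSegal X := by
  intro m
  set e : SimplexCategory.mk 1 ⟶ SimplexCategory.mk (m + 2) :=
    edge (m + 2) ⟨m + 1, by omega⟩ ⟨m + 2, by omega⟩ (by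
      exact Fin.mk_le_mk.mpr (by omega)) with he
  -- The square with horizontal maps induced by `e` and vertical maps `p` is a pullback,
  -- by cancellation from the right-fibration squares for `[m+2]` and `[1]`.
  have hA : IsPullback (X.map e.op)
      (p.app (op (SimplexCategory.mk (m + 2)))) (p.app (op (SimplexCategory.mk 1)))
      (Y.map e.op) := by
    refine IsPullback.of_right ?_ (p.naturality e.op) (hp 0)
    have h1 : X.map e.op ≫ X.map (pt (0 + 1) (Fin.last (0 + 1))).op =
        X.map (pt (m + 1 + 1) (Fin.last (m + 1 + 1))).op := by
      rw [← X.map_comp, ← op_comp, pt_comp_edge_one]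
      rfl
    have h2 : Y.map e.op ≫ Y.map (pt (0 + 1) (Fin.last (0 + 1))).op =
        Y.map (pt (m + 1 + 1) (Fin.last (m + 1 + 1))).op := by
      rw [← Y.map_comp, ← op_comp, pt_comp_edge_one]
      rfl
    rw [h1, h2]
    exact hp (m + 1)
  -- Paste it on top of the Segal square for `Y`.
  have hR := hA.paste_vert (hY m)
  rw [← p.naturality (SimplexCategory.δ (Fin.last (m + 2))).op,
    ← p.naturality (pt 1 0).op] at hR
  -- Cancel the right-fibration square for `[m+1]` from the bottom.
  refine hR.of_bot ?_ (hp m)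
  rw [← X.map_comp, ← op_comp, pt_comp_edge_zero, ← X.map_comp, ← op_comp, pt_comp_delta]
end

section
/- Let C be a simplicial object in a category with pullbacks satisfying the strong Segal condition. Then the twisted arrow simplicial object Tw(C) := C ∘ e^op is a right fibration over C × C^op; concretely, for every n ≥ 1 the canonical map C_{2n+1} → C_1 ×_{C_0 × C_0} (C_n × C_n) is an isomorphism. -/
open CategoryTheory CategoryTheory.Limits Opposite

/-- The inclusion `[m] ⟶ [m+l]` of `{0,…,m}`. -/
def inclFirst (m l : ℕ) : SimplexCategory.mk m ⟶ SimplexCategory.mk (m + l) :=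
  SimplexCategory.Hom.mk ⟨Fin.castLE (show m + 1 ≤ m + l + 1 by omega), fun _ _ hab => hab⟩

/-- The inclusion `[l] ⟶ [m+l]` of `{m,…,m+l}`. -/
def inclLast (m l : ℕ) : SimplexCategory.mk l ⟶ SimplexCategory.mk (m + l) :=
  SimplexCategory.Hom.mk
    ⟨fun i => ⟨m + (i : ℕ), by
      show m + (i : ℕ) < m + l + 1
      have hi : (i : ℕ) < l + 1 := i.isLt
      omega⟩, fun a b h => by
      have h' : (a : ℕ) ≤ (b : ℕ) := h
      simp only [Fin.mk_le_mk]
      omega⟩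

/-- A simplicial object `C` satisfies the strong Segal condition if for all `m, l ≥ 0` the
square with corners `C_{m+l}, C_m, C_l, C_0` induced by the inclusions `{0,…,m} ⊆ [m+l]`,
`{m,…,m+l} ⊆ [m+l]` and `{m}` is a pullback square. -/
def StrongSegal {C : Type*} [Category C] (Z : SimplexCategoryᵒᵖ ⥤ C) : Prop :=
  ∀ m l : ℕ,
    IsPullback (Z.map (inclFirst m l).op) (Z.map (inclLast m l).op)
      (Z.map (pt m (Fin.last m)).op) (Z.map (pt l 0).op)

/-- The first join inclusion `[n] ⟶ [n] ⋆ [n]ᵒᵖ ≅ [2n+1]`, `i ↦ i`. -/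
def jFirst (n : ℕ) : SimplexCategory.mk n ⟶ SimplexCategory.mk (n + (n + 1)) :=
  SimplexCategory.Hom.mk ⟨Fin.castLE (show n + 1 ≤ n + (n + 1) + 1 by omega), fun _ _ hab => hab⟩

/-- The second join inclusion `[n]ᵒᵖ ⟶ [n] ⋆ [n]ᵒᵖ ≅ [2n+1]`, read as the order-preserving
map `[n] ⟶ [2n+1]`, `j ↦ n + 1 + j`. -/
def jSecond (n : ℕ) : SimplexCategory.mk n ⟶ SimplexCategory.mk (n + (n + 1)) :=
  SimplexCategory.Hom.mk
    ⟨fun i => ⟨n + 1 + (i : ℕ), by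
      show n + 1 + (i : ℕ) < n + (n + 1) + 1
      have hi : (i : ℕ) < n + 1 := i.isLt
      omega⟩, fun a b h => by
      have h' : (a : ℕ) ≤ (b : ℕ) := h
      simp only [Fin.mk_le_mk]
      omega⟩

/-- The middle edge `[1] ⟶ [2n+1]`, `0 ↦ n`, `1 ↦ n+1`; it is `e` applied to `{n} ⊆ [n]`. -/
def gMid (n : ℕ) : SimplexCategory.mk 1 ⟶ SimplexCategory.mk (n + (n + 1)) :=
  edge (n + (n + 1)) ⟨n, by omega⟩ ⟨n + 1, by omega⟩ (Fin.mk_le_mk.mpr (by omega))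


/-- Variant of `inclFirst` with flexible codomain. -/
def inclFirst' (m k : ℕ) (h : m ≤ k) : SimplexCategory.mk m ⟶ SimplexCategory.mk k :=
  SimplexCategory.Hom.mk ⟨Fin.castLE (show m + 1 ≤ k + 1 by omega), fun _ _ hab => hab⟩

/-- Variant of `inclLast` with flexible codomain. -/
def inclLast' (l k : ℕ) (h : l ≤ k) : SimplexCategory.mk l ⟶ SimplexCategory.mk k :=
  SimplexCategory.Hom.mk
    ⟨fun i => ⟨(k - l) + (i : ℕ), by
      show (k - l) + (i : ℕ) < k + 1
      have hi : (i : ℕ) < l + 1 := i.isLt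
      omega⟩, fun a b hab => by
      have h' : (a : ℕ) ≤ (b : ℕ) := hab
      simp only [Fin.mk_le_mk]
      omega⟩

lemma segal' {C : Type*} [Category C] {X : SimplexCategoryᵒᵖ ⥤ C} (hX : StrongSegal X)
    (m l k : ℕ) (hk : m + l = k) (h1 : m ≤ k) (h2 : l ≤ k) :
    IsPullback (X.map (inclFirst' m k h1).op) (X.map (inclLast' l k h2).op)
      (X.map (pt m (Fin.last m)).op) (X.map (pt l 0).op) := by
  subst hk
  have e1 : inclFirst' m (m + l) h1 = inclFirst m l := by
    ext i
    rfl
  have e2 : inclLast' l (m + l) h2 = inclLast m l := by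
    ext i
    show ((m + l - l) + (i : ℕ) : ℕ) = m + (i : ℕ)
    omega
  rw [e1, e2]
  exact hX m l

lemma comb {C : Type*} [Category C] [HasBinaryProducts C]
    {P Q X1 Xn X0 : C}
    (q₁ : Q ⟶ X1) (q₂ : Q ⟶ Xn) (v : X1 ⟶ X0) (t : Xn ⟶ X0)
    (p₁ : P ⟶ Xn) (p₂ : P ⟶ Q) (s : Xn ⟶ X0) (u : X1 ⟶ X0)
    (hB : IsPullback q₁ q₂ v t) (hA : IsPullback p₁ p₂ s (q₁ ≫ u)) :
    IsPullback (p₂ ≫ q₁) (prod.lift p₁ (p₂ ≫ q₂)) (prod.lift u v) (prod.map s t) := by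
  have weq : (p₂ ≫ q₁) ≫ prod.lift u v = prod.lift p₁ (p₂ ≫ q₂) ≫ prod.map s t := by
    apply Limits.prod.hom_ext
    · simp only [Category.assoc, prod.lift_fst, prod.lift_map]
      rw [hA.w]
    · simp only [Category.assoc, prod.lift_fst, prod.lift_snd, prod.lift_map, hB.w]
  -- projections of cone conditions
  have hu : ∀ c : PullbackCone (prod.lift u v) (prod.map s t),
      c.fst ≫ u = (c.snd ≫ Limits.prod.fst) ≫ s := by
    intro c
    have := congrArg (fun z => z ≫ Limits.prod.fst) c.condition
    simp only [Category.assoc, prod.comp_lift] at this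
    erw [prod.lift_fst] at this
    simpa [Category.assoc] using this
  have hv : ∀ c : PullbackCone (prod.lift u v) (prod.map s t),
      c.fst ≫ v = (c.snd ≫ Limits.prod.snd) ≫ t := by
    intro c
    have := congrArg (fun z => z ≫ Limits.prod.snd) c.condition
    simp only [Category.assoc, prod.comp_lift] at this
    erw [prod.lift_snd] at this
    simpa [Category.assoc] using this
  -- the intermediate lift to Q
  have lQ : ∀ c : PullbackCone (prod.lift u v) (prod.map s t),
      { w : c.pt ⟶ Q // w ≫ q₁ = c.fst ∧ w ≫ q₂ = c.snd ≫ Limits.prod.snd } := by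
    intro c
    exact ⟨hB.lift c.fst (c.snd ≫ Limits.prod.snd) (hv c),
      hB.lift_fst _ _ _, hB.lift_snd _ _ _⟩
  have hcond : ∀ c : PullbackCone (prod.lift u v) (prod.map s t),
      (c.snd ≫ Limits.prod.fst) ≫ s = (lQ c).1 ≫ (q₁ ≫ u) := by
    intro c
    rw [← Category.assoc, (lQ c).2.1, ← hu c]
  have lP : ∀ c : PullbackCone (prod.lift u v) (prod.map s t),
      { w : c.pt ⟶ P // w ≫ p₁ = c.snd ≫ Limits.prod.fst ∧ w ≫ p₂ = (lQ c).1 } := by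
    intro c
    exact ⟨hA.lift (c.snd ≫ Limits.prod.fst) (lQ c).1 (hcond c),
      hA.lift_fst _ _ _, hA.lift_snd _ _ _⟩
  refine IsPullback.of_isLimit (PullbackCone.IsLimit.mk weq (fun c => (lP c).1)
    (fun c => ?_) (fun c => ?_) (fun c m hm1 hm2 => ?_))
  · rw [← Category.assoc, (lP c).2.2, (lQ c).2.1]
  · apply Limits.prod.hom_ext
    · simp only [Category.assoc, prod.lift_fst]
      exact (lP c).2.1
    · simp only [Category.assoc, prod.lift_snd]
      rw [← Category.assoc, (lP c).2.2, (lQ c).2.2]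
  · -- uniqueness
    apply hA.hom_ext
    · rw [(lP c).2.1]
      have := congrArg (fun z => z ≫ Limits.prod.fst) hm2
      simp only [Category.assoc] at this
      erw [prod.lift_fst] at this
      simpa [Category.assoc] using this
    · rw [(lP c).2.2]
      apply hB.hom_ext
      · rw [Category.assoc, (lQ c).2.1, ← hm1]
      · rw [Category.assoc, (lQ c).2.2]
        have := congrArg (fun z => z ≫ Limits.prod.snd) hm2
        simp only [Category.assoc] at this
        erw [prod.lift_snd] at this
        simpa [Category.assoc] using this

/-- Let `X` be a simplicial object satisfying the strong Segal condition in a category with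
pullbacks (and binary products).  Then the twisted arrow simplicial object
`Tw(X) = X ∘ eᵒᵖ` is a right fibration over `X × Xᵒᵖ`: concretely, for every `n ≥ 1` the
canonical map `X_{2n+1} ⟶ X₁ ×_{X₀ × X₀} (Xₙ × Xₙ)` is an isomorphism, i.e. the displayed
square is a pullback square. -/
theorem stmt4 {C : Type*} [Category C] [HasPullbacks C] [HasBinaryProducts C]
    (X : SimplexCategoryᵒᵖ ⥤ C) (hX : StrongSegal X) (n : ℕ) (hn : 1 ≤ n) :
    IsPullback
      (X.map (gMid n).op)
      (prod.lift (X.map (jFirst n).op) (X.map (jSecond n).op))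
      (prod.lift (X.map (pt 1 0).op) (X.map (pt 1 1).op))
      (prod.map (X.map (pt n (Fin.last n)).op) (X.map (pt n 0).op)) := by
  have h1 : (1 : ℕ) ≤ n + 1 := by omega
  have h2 : n ≤ n + 1 := by omega
  have hB := segal' hX 1 n (n + 1) (by omega) h1 h2
  have hA := hX n (n + 1)
  -- rewrite the bottom-right corner map of `hA` as a composite through `X₁`
  have ew : pt (n + 1) 0 = pt 1 0 ≫ inclFirst' 1 (n + 1) h1 := by
    ext i
    rfl
  rw [ew, op_comp, Functor.map_comp] at hA
  have e_v : pt 1 (Fin.last 1) = pt 1 1 := rfl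
  rw [e_v] at hB
  have key := comb _ _ _ _ _ _ _ _ hB hA
  -- identify the maps in the statement with those produced by `comb`
  have e_gMid : gMid n = inclFirst' 1 (n + 1) h1 ≫ inclLast n (n + 1) := by
    ext i
    fin_cases i <;> rfl
  have e_jF : jFirst n = inclFirst n (n + 1) := rfl
  have e_jS : jSecond n = inclLast' n (n + 1) h2 ≫ inclLast n (n + 1) := by
    ext i
    show (n + 1 + (i : ℕ) : ℕ) = n + ((n + 1 - n) + (i : ℕ))
    omega
  rw [e_gMid, e_jS, op_comp, op_comp, Functor.map_comp, Functor.map_comp]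
  exact key
end

section
/- Let B be a category with pushouts and K a category with an initial object ⊥. Then the evaluation functor ev_⊥: Fun(K, B) → B at the initial object is a Grothendieck opfibration, and a morphism φ: F → G in Fun(K, B) is opcartesian with respect to ev_⊥ if and only if φ is a cocartesian natural transformation, i.e. for every morphism u: x → y in K the naturality square with corners F(x), F(y), G(x), G(y) is a pushout square. -/
open CategoryTheory CategoryTheory.Limits

/-- A morphism `φ : F ⟶ G` is opcartesian with respect to `p : E ⥤ B` if for every `H`
and every `ψ : F ⟶ H` with a factorization `p ψ = p φ ≫ χ` in `B`, there is a unique lift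
`χ' : G ⟶ H` with `φ ≫ χ' = ψ` and `p χ' = χ`. -/
def IsOpcartesian {E B : Type*} [Category E] [Category B] (p : E ⥤ B)
    {F G : E} (φ : F ⟶ G) : Prop :=
  ∀ (H : E) (ψ : F ⟶ H) (χ : p.obj G ⟶ p.obj H),
    p.map ψ = p.map φ ≫ χ → ∃! χ' : G ⟶ H, φ ≫ χ' = ψ ∧ p.map χ' = χ

/-- `p : E ⥤ B` is a Grothendieck opfibration if every morphism `f : p F ⟶ A` of `B` admits
an opcartesian lift with source `F`. -/
def IsOpfibration {E B : Type*} [Category E] [Category B] (p : E ⥤ B) : Prop :=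
  ∀ (F : E) (A : B) (f : p.obj F ⟶ A),
    ∃ (G : E) (φ : F ⟶ G) (e : p.obj G = A),
      IsOpcartesian p φ ∧ p.map φ ≫ eqToHom e = f

namespace Stmt9Aux

variable {B K : Type*} [Category B] [Category K] {bot : K}

lemma to_bot (hbot : IsInitial bot) : hbot.to bot = 𝟙 bot := hbot.hom_ext _ _

/-- If all naturality squares of `φ` are pushouts, then `φ` is opcartesian for
evaluation at the initial object. -/
lemma opcart_of_squares (hbot : IsInitial bot) {F G : K ⥤ B} (φ : F ⟶ G)
    (h : ∀ ⦃x y : K⦄ (u : x ⟶ y), IsPushout (F.map u) (φ.app x) (φ.app y) (G.map u)) :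
    IsOpcartesian ((evaluation K B).obj bot) φ := by
  intro H ψ χ hχ
  simp only [evaluation_obj_map] at hχ
  have sq : ∀ x : K, IsPushout (F.map (hbot.to x)) (φ.app bot) (φ.app x) (G.map (hbot.to x)) :=
    fun x => h (hbot.to x)
  have w : ∀ x : K, F.map (hbot.to x) ≫ ψ.app x = φ.app bot ≫ (χ ≫ H.map (hbot.to x)) := by
    intro x
    rw [ψ.naturality, hχ, Category.assoc]
  refine ⟨{ app := fun x => (sq x).desc (ψ.app x) (χ ≫ H.map (hbot.to x)) (w x),
            naturality := ?_ }, ⟨?_, ?_⟩, ?_⟩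
  · intro x y v
    apply (sq x).hom_ext
    · simp only [← Category.assoc]
      rw [← φ.naturality, (sq x).inl_desc, Category.assoc, (sq y).inl_desc, ψ.naturality]
    · have e1 : G.map (hbot.to x) ≫ G.map v = G.map (hbot.to y) := by
        rw [← G.map_comp]; congr 1; exact hbot.hom_ext _ _
      have e2 : H.map (hbot.to x) ≫ H.map v = H.map (hbot.to y) := by
        rw [← H.map_comp]; congr 1; exact hbot.hom_ext _ _
      simp only [← Category.assoc]
      rw [e1, (sq y).inr_desc, (sq x).inr_desc, Category.assoc, e2]
  · ext x
    exact (sq x).inl_desc _ _ _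
  · have key : ∀ d : G.obj bot ⟶ H.obj bot,
        G.map (hbot.to bot) ≫ d = χ ≫ H.map (hbot.to bot) → d = χ := by
      intro d hd
      rw [to_bot hbot, G.map_id, H.map_id] at hd
      simpa using hd
    exact key _ ((sq bot).inr_desc _ _ _)
  · rintro θ ⟨hθ1, hθ2⟩
    simp only [evaluation_obj_map] at hθ2
    ext x
    apply (sq x).hom_ext
    · rw [(sq x).inl_desc, ← hθ1]; rfl
    · rw [(sq x).inr_desc, θ.naturality, hθ2]

noncomputable section

variable [HasPushouts B] (hbot : IsInitial bot) (F : K ⥤ B) {A : B} (f : F.obj bot ⟶ A)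

/-- The natural map from the constant functor at `F ⊥` to `F`. -/
def diag : (Functor.const K).obj (F.obj bot) ⟶ F where
  app x := F.map (hbot.to x)
  naturality x y u := by
    simp only [Functor.const_obj_obj, Functor.const_obj_map, Category.id_comp, ← F.map_comp]
    congr 1
    exact hbot.hom_ext _ _

/-- The canonical opcartesian lift, as a pushout in the functor category. -/
def canG : K ⥤ B := pushout (diag hbot F) ((Functor.const K).map f)

def canφ : F ⟶ canG hbot F f := pushout.inl _ _

def canρ : (Functor.const K).obj A ⟶ canG hbot F f := pushout.inr _ _

lemma can_pointwise (x : K) :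
    IsPushout (F.map (hbot.to x)) f ((canφ hbot F f).app x) ((canρ hbot F f).app x) := by
  have := (IsPushout.of_hasPushout (diag hbot F) ((Functor.const K).map f)).map
    ((evaluation K B).obj x)
  simpa [diag, canφ, canρ, canG] using this

lemma can_squares ⦃x y : K⦄ (u : x ⟶ y) :
    IsPushout (F.map u) ((canφ hbot F f).app x) ((canφ hbot F f).app y)
      ((canG hbot F f).map u) := by
  have t := can_pointwise hbot F f x
  have s := can_pointwise hbot F f y
  have e1 : F.map (hbot.to x) ≫ F.map u = F.map (hbot.to y) := by
    rw [← F.map_comp]; congr 1; exact hbot.hom_ext _ _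
  have e2 : (canρ hbot F f).app x ≫ (canG hbot F f).map u = (canρ hbot F f).app y := by
    have := (canρ hbot F f).naturality u
    simpa using this.symm
  have s' : IsPushout (F.map (hbot.to x) ≫ F.map u) f ((canφ hbot F f).app y)
      ((canρ hbot F f).app x ≫ (canG hbot F f).map u) := by
    rw [e1, e2]; exact s
  exact IsPushout.of_left s' ((canφ hbot F f).naturality u) t

open Classical in
/-- Replace the value of a functor at `bot` by an isomorphic object, on the nose. -/
def fixObj (G : K ⥤ B) (bot : K) (A : B) (x : K) : B :=
  if x = bot then A else G.obj x

lemma fixObj_bot (G : K ⥤ B) (bot : K) (A : B) : fixObj G bot A bot = A := if_pos rfl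

open Classical in
def fixIso (G : K ⥤ B) (bot : K) (A : B) (i : G.obj bot ≅ A) (x : K) :
    G.obj x ≅ fixObj G bot A x :=
  if h : x = bot then
    eqToIso (congrArg G.obj h) ≪≫ i ≪≫ eqToIso (show fixObj G bot A x = A from if_pos h).symm
  else eqToIso (show fixObj G bot A x = G.obj x from if_neg h).symm

lemma fixIso_bot_hom (G : K ⥤ B) (bot : K) (A : B) (i : G.obj bot ≅ A) :
    (fixIso G bot A i bot).hom ≫ eqToHom (fixObj_bot G bot A) = i.hom := by
  simp [fixIso]

def fixFunctor (G : K ⥤ B) (bot : K) (A : B) (i : G.obj bot ≅ A) : K ⥤ B where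
  obj := fixObj G bot A
  map u := (fixIso G bot A i _).inv ≫ G.map u ≫ (fixIso G bot A i _).hom
  map_id x := by simp
  map_comp := by intros; simp

def fixNatIso (G : K ⥤ B) (bot : K) (A : B) (i : G.obj bot ≅ A) :
    G ≅ fixFunctor G bot A i :=
  NatIso.ofComponents (fixIso G bot A i) (by
    intro x y u
    simp [fixFunctor])

end

end Stmt9Aux

open Stmt9Aux in
/-- If `B` has pushouts and `K` has an initial object `⊥`, then evaluation at `⊥` is a
Grothendieck opfibration `Fun(K,B) → B`, and a morphism `φ : F ⟶ G` is opcartesian if and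
only if every naturality square of `φ` is a pushout square (i.e. `φ` is a cocartesian
natural transformation). -/
theorem stmt9 {B K : Type*} [Category B] [Category K] [HasPushouts B]
    (bot : K) (hbot : IsInitial bot) :
    IsOpfibration ((evaluation K B).obj bot) ∧
      ∀ (F G : K ⥤ B) (φ : F ⟶ G),
        IsOpcartesian ((evaluation K B).obj bot) φ ↔
          ∀ ⦃x y : K⦄ (u : x ⟶ y), IsPushout (F.map u) (φ.app x) (φ.app y) (G.map u) := by
  have hid : ∀ F : K ⥤ B, F.map (hbot.to bot) = 𝟙 _ := by
    intro F; rw [to_bot hbot, F.map_id]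
  have part2 : ∀ (F G : K ⥤ B) (φ : F ⟶ G),
      IsOpcartesian ((evaluation K B).obj bot) φ ↔
        ∀ ⦃x y : K⦄ (u : x ⟶ y), IsPushout (F.map u) (φ.app x) (φ.app y) (G.map u) := by
    intro F G φ
    constructor
    · intro hopc
      set f := φ.app bot with hf
      set G₀ := canG hbot F f with hG₀
      set φ₀ := canφ hbot F f with hφ₀
      set ρ := canρ hbot F f with hρ
      have squares₀ := can_squares hbot F f
      have opc₀ : IsOpcartesian ((evaluation K B).obj bot) φ₀ :=
        opcart_of_squares hbot φ₀ squares₀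
      have pb := can_pointwise hbot F f bot
      rw [hid F] at pb
      have hcomm : φ₀.app bot = φ.app bot ≫ ρ.app bot := by
        have := pb.w; simpa using this
      obtain ⟨θ, ⟨hθ1, hθ2⟩, -⟩ := hopc G₀ φ₀ (ρ.app bot) (by simpa using hcomm)
      simp only [evaluation_obj_map] at hθ2
      have wχ₂ : 𝟙 (F.obj bot) ≫ φ.app bot = f ≫ 𝟙 (G.obj bot) := by simp [hf]
      set χ₂ := pb.desc (φ.app bot) (𝟙 _) wχ₂ with hχ₂
      have h1 : φ₀.app bot ≫ χ₂ = φ.app bot := pb.inl_desc _ _ _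
      have h2 : ρ.app bot ≫ χ₂ = 𝟙 _ := pb.inr_desc _ _ _
      obtain ⟨θ₂, ⟨hθ₂1, hθ₂2⟩, -⟩ := opc₀ G φ χ₂ (by simpa using h1.symm)
      simp only [evaluation_obj_map] at hθ₂2
      have hret : χ₂ ≫ ρ.app bot = 𝟙 _ := by
        apply pb.hom_ext
        · rw [← Category.assoc, h1, Category.comp_id, hcomm]
        · rw [← Category.assoc, h2]; simp [hρ]
      have inv1 : θ₂ ≫ θ = 𝟙 G₀ := by
        obtain ⟨u0, -, huniq⟩ := opc₀ G₀ φ₀ (𝟙 _) (by simp)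
        have ha := huniq (θ₂ ≫ θ) ⟨by rw [← Category.assoc, hθ₂1, hθ1],
          by simp [hθ₂2, hθ2, hret]⟩
        have hb := huniq (𝟙 _) ⟨by simp, by simp⟩
        rw [ha, hb]
      have inv2 : θ ≫ θ₂ = 𝟙 G := by
        obtain ⟨u0, -, huniq⟩ := hopc G φ (𝟙 _) (by simp)
        have ha := huniq (θ ≫ θ₂) ⟨by rw [← Category.assoc, hθ1, hθ₂1],
          by simp [hθ2, hθ₂2, h2]⟩
        have hb := huniq (𝟙 _) ⟨by simp, by simp⟩
        rw [ha, hb]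
      haveI : IsIso θ₂ := ⟨θ, inv1, inv2⟩
      intro x y u
      have tsq : IsPushout (G₀.map u) (θ₂.app x) (θ₂.app y) (G.map u) :=
        IsPushout.of_vert_isIso ⟨θ₂.naturality u⟩
      have key := (squares₀ u).paste_vert tsq
      rw [← NatTrans.comp_app, ← NatTrans.comp_app, hθ₂1] at key
      exact key
    · exact opcart_of_squares hbot φ
  refine ⟨?_, part2⟩
  intro F A f
  set G := canG hbot F f with hG
  set φc := canφ hbot F f with hφc
  set ρ := canρ hbot F f with hρ
  have pb := can_pointwise hbot F f bot
  rw [hid F] at pb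
  have wj : 𝟙 (F.obj bot) ≫ f = f ≫ 𝟙 A := by simp
  set j := pb.desc f (𝟙 A) wj with hj
  have h1 : φc.app bot ≫ j = f := pb.inl_desc _ _ _
  have h2 : ρ.app bot ≫ j = 𝟙 A := pb.inr_desc _ _ _
  have hw : f ≫ ρ.app bot = φc.app bot := by
    have := pb.w; simpa using this.symm
  have jρ : j ≫ ρ.app bot = 𝟙 _ := by
    apply pb.hom_ext
    · rw [← Category.assoc, h1, hw, Category.comp_id]
    · rw [← Category.assoc, h2]; simp [hρ]
  set i : G.obj bot ≅ A := ⟨j, ρ.app bot, jρ, h2⟩ with hi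
  set G' := fixFunctor G bot A i with hG'
  set η := fixNatIso G bot A i with hη
  set φ' := φc ≫ η.hom with hφ'
  have e : ((evaluation K B).obj bot).obj G' = A := fixObj_bot G bot A
  refine ⟨G', φ', e, ?_, ?_⟩
  · refine (part2 F G' φ').mpr ?_
    intro x y u
    have tsq : IsPushout (G.map u) (η.hom.app x) (η.hom.app y) (G'.map u) :=
      IsPushout.of_vert_isIso ⟨η.hom.naturality u⟩
    have key := (can_squares hbot F f u).paste_vert tsq
    rw [← NatTrans.comp_app, ← NatTrans.comp_app] at key
    exact key
  · show (φc ≫ η.hom).app bot ≫ eqToHom e = f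
    rw [NatTrans.comp_app, Category.assoc]
    have happ : η.hom.app bot = (fixIso G bot A i bot).hom := by
      simp [hη, fixNatIso]; rfl
    rw [happ]; erw [fixIso_bot_hom]; rw [hi]
    exact h1
end

section
/- Let A be an abelian category and K a category with initial object ⊥. Let Fun^mono(K, A) ⊆ Fun(K, A) denote the full subcategory of functors sending every morphism of K to a monomorphism. Then the evaluation functor Fun^mono(K, A) → A at ⊥ is a Grothendieck opfibration, and a morphism φ: F → G in Fun^mono(K, A) is opcartesian if and only if every naturality square of φ is a pushout square in A. -/
open CategoryTheory CategoryTheory.Limits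

/-- The property of a functor `K ⥤ A` of sending every morphism to a monomorphism. -/
def MonoValued {A K : Type*} [Category A] [Category K] (F : K ⥤ A) : Prop :=
  ∀ ⦃x y : K⦄ (u : x ⟶ y), Mono (F.map u)

namespace Stmt17Aux

variable {A K : Type*} [Category A] [Category K] [Abelian A] {bot : K}

/-- Evaluation at `bot` on the monovalued full subcategory. -/
abbrev Ev (A K : Type*) [Category A] [Category K] (bot : K) :
    ObjectProperty.FullSubcategory (MonoValued (A := A) (K := K)) ⥤ A :=
  ObjectProperty.ι (MonoValued (A := A) (K := K)) ⋙ (evaluation K A).obj bot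

lemma sq_all (hbot : IsInitial bot) {F G : K ⥤ A} (φ : F ⟶ G)
    (h : ∀ x : K, IsPushout (F.map (hbot.to x)) (φ.app bot) (φ.app x) (G.map (hbot.to x)))
    {x y : K} (u : x ⟶ y) :
    IsPushout (F.map u) (φ.app x) (φ.app y) (G.map u) := by
  have e : hbot.to x ≫ u = hbot.to y := hbot.hom_ext _ _
  have s := h y
  rw [← e, F.map_comp, G.map_comp] at s
  exact IsPushout.of_left s (φ.naturality u) (h x)

/-- pushout bot-squares imply opcartesian. -/
lemma opcart_of_sq (hbot : IsInitial bot)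
    {F G : ObjectProperty.FullSubcategory (MonoValued (A := A) (K := K))} (φ : F ⟶ G)
    (h : ∀ x : K, IsPushout (F.obj.map (hbot.to x)) (φ.hom.app bot) (φ.hom.app x)
      (G.obj.map (hbot.to x))) :
    IsOpcartesian (Ev A K bot) φ := by
  intro H ψ χ hχ
  replace hχ : ψ.hom.app bot = φ.hom.app bot ≫ χ := hχ
  have key : ∀ x : K, F.obj.map (hbot.to x) ≫ ψ.hom.app x =
      φ.hom.app bot ≫ χ ≫ H.obj.map (hbot.to x) := fun x => by
    rw [ψ.hom.naturality (hbot.to x), hχ, Category.assoc]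
  refine ⟨ObjectProperty.homMk { app := fun x => (h x).desc (ψ.hom.app x) (χ ≫ H.obj.map (hbot.to x)) (key x),
                                 naturality := ?_ }, ⟨?_, ?_⟩, ?_⟩
  · intro x y u
    apply (h x).hom_ext
    · calc φ.hom.app x ≫ G.obj.map u ≫ (h y).desc _ _ (key y)
          = (φ.hom.app x ≫ G.obj.map u) ≫ (h y).desc _ _ (key y) := by rw [Category.assoc]
        _ = F.obj.map u ≫ (φ.hom.app y ≫ (h y).desc _ _ (key y)) := by
            rw [← φ.hom.naturality u, Category.assoc]
        _ = F.obj.map u ≫ ψ.hom.app y := by rw [(h y).inl_desc]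
        _ = ψ.hom.app x ≫ H.obj.map u := by rw [ψ.hom.naturality]
        _ = (φ.hom.app x ≫ (h x).desc _ _ (key x)) ≫ H.obj.map u := by rw [(h x).inl_desc]
        _ = φ.hom.app x ≫ (h x).desc _ _ (key x) ≫ H.obj.map u := by rw [Category.assoc]
    · calc G.obj.map (hbot.to x) ≫ G.obj.map u ≫ (h y).desc _ _ (key y)
          = G.obj.map (hbot.to y) ≫ (h y).desc _ _ (key y) := by
            rw [← Category.assoc, ← G.obj.map_comp, hbot.hom_ext (hbot.to x ≫ u) (hbot.to y)]
        _ = χ ≫ H.obj.map (hbot.to y) := by rw [(h y).inr_desc]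
        _ = χ ≫ H.obj.map (hbot.to x) ≫ H.obj.map u := by
            rw [← H.obj.map_comp, hbot.hom_ext (hbot.to x ≫ u) (hbot.to y)]
        _ = (G.obj.map (hbot.to x) ≫ (h x).desc _ _ (key x)) ≫ H.obj.map u := by
            rw [(h x).inr_desc, Category.assoc]
        _ = G.obj.map (hbot.to x) ≫ (h x).desc _ _ (key x) ≫ H.obj.map u := by
            rw [Category.assoc]
  · apply ObjectProperty.hom_ext
    apply NatTrans.ext
    funext x
    exact (h x).inl_desc _ _ _
  · show (h bot).desc _ _ (key bot) = χ
    apply (h bot).hom_ext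
    · rw [(h bot).inl_desc, hχ]
    · rw [(h bot).inr_desc, hbot.hom_ext (hbot.to bot) (𝟙 bot)]
      simp
  · rintro χ'' ⟨h1, h2⟩
    have h2' : χ''.hom.app bot = χ := h2
    apply ObjectProperty.hom_ext
    apply NatTrans.ext
    funext x
    show χ''.hom.app x = (h x).desc _ _ (key x)
    apply (h x).hom_ext
    · rw [(h x).inl_desc]
      exact congr_arg (fun t => NatTrans.app t.hom x) h1
    · rw [(h x).inr_desc, χ''.hom.naturality (hbot.to x), h2']

variable (hbot : IsInitial bot)

/-- The pointwise pushout functor. -/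
noncomputable def PP (F : K ⥤ A) {A0 : A} (f : F.obj bot ⟶ A0) : K ⥤ A where
  obj x := pushout (F.map (hbot.to x)) f
  map {x y} u := pushout.desc (F.map u ≫ pushout.inl _ _) (pushout.inr _ _) (by
    rw [← Category.assoc, ← F.map_comp, hbot.hom_ext (hbot.to x ≫ u) (hbot.to y),
      pushout.condition])
  map_id x := by
    apply pushout.hom_ext <;> simp
  map_comp {x y z} u v := by
    apply pushout.hom_ext <;> simp [pushout.inl_desc, pushout.inr_desc, pushout.inl_desc_assoc, pushout.inr_desc_assoc]

/-- The canonical map into the pointwise pushout. -/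
noncomputable def PPinl (F : K ⥤ A) {A0 : A} (f : F.obj bot ⟶ A0) : F ⟶ PP hbot F f where
  app x := pushout.inl _ _
  naturality {x y} u := by simp [PP, pushout.inl_desc]

lemma map_to_bot_id (F : K ⥤ A) : F.map (hbot.to bot) = 𝟙 _ := by
  rw [hbot.hom_ext (hbot.to bot) (𝟙 bot), F.map_id]

/-- The value at `bot` of the pointwise pushout is iso to `A0`. -/
noncomputable def PPebot (F : K ⥤ A) {A0 : A} (f : F.obj bot ⟶ A0) :
    A0 ≅ (PP hbot F f).obj bot where
  hom := pushout.inr _ _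
  inv := pushout.desc f (𝟙 A0) (by rw [map_to_bot_id hbot F, Category.id_comp, Category.comp_id])
  hom_inv_id := by exact pushout.inr_desc _ _ _
  inv_hom_id := by
    dsimp only [PP]
    apply pushout.hom_ext
    · rw [pushout.inl_desc_assoc]
      show f ≫ pushout.inr _ _ =
        pushout.inl (F.map (hbot.to bot)) f ≫ 𝟙 (pushout (F.map (hbot.to bot)) f)
      rw [Category.comp_id, ← pushout.condition]
      exact (congrArg (fun t => t ≫ pushout.inl (F.map (hbot.to bot)) f)
        (map_to_bot_id hbot F)).trans (Category.id_comp _)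
    · rw [pushout.inr_desc_assoc, Category.id_comp]
      show pushout.inr _ _ =
        pushout.inr (F.map (hbot.to bot)) f ≫ 𝟙 (pushout (F.map (hbot.to bot)) f)
      rw [Category.comp_id]

lemma PPinl_app_bot (F : K ⥤ A) {A0 : A} (f : F.obj bot ⟶ A0) :
    (PPinl hbot F f).app bot = f ≫ (PPebot hbot F f).hom := by
  show pushout.inl _ _ = f ≫ pushout.inr _ _
  rw [← pushout.condition]
  exact ((congrArg (fun t => t ≫ pushout.inl (F.map (hbot.to bot)) f)
    (map_to_bot_id hbot F)).trans (Category.id_comp _)).symm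

lemma PP_sq (F : K ⥤ A) {A0 : A} (f : F.obj bot ⟶ A0) (x : K) :
    IsPushout (F.map (hbot.to x)) ((PPinl hbot F f).app bot) ((PPinl hbot F f).app x)
      ((PP hbot F f).map (hbot.to x)) := by
  have S := IsPushout.of_hasPushout (F.map (hbot.to x)) f
  have b : IsPushout (pushout.inr (F.map (hbot.to x)) f) (PPebot hbot F f).hom
      (𝟙 _) ((PP hbot F f).map (hbot.to x)) := by
    apply IsPushout.of_vert_isIso
    constructor
    show pushout.inr _ _ ≫ 𝟙 _ = pushout.inr _ _ ≫ _
    rw [Category.comp_id]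
    show pushout.inr _ _ = pushout.inr _ _ ≫ pushout.desc _ _ _
    rw [pushout.inr_desc]
  have h := S.paste_vert b
  rw [Category.comp_id] at h
  rw [PPinl_app_bot hbot F f]
  exact h

lemma PP_mono (F : K ⥤ A) (hF : MonoValued F) {A0 : A} (f : F.obj bot ⟶ A0) :
    MonoValued (PP hbot F f) := by
  intro x y u
  have sq := (sq_all hbot (PPinl hbot F f) (fun z => PP_sq hbot F f z) u).flip
  haveI : Mono (F.map u) := hF u
  have hfac : (PP hbot F f).map u = pushout.inl _ _ ≫ sq.isoPushout.inv := by
    rw [← IsPushout.inl_isoPushout_hom sq, Category.assoc, Iso.hom_inv_id, Category.comp_id]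
  rw [hfac]
  exact mono_comp _ _

/-- A functor with replaced objects. -/
@[simps]
noncomputable def copyFun (T : K ⥤ A) (o : K → A) (i : ∀ x, T.obj x ≅ o x) : K ⥤ A where
  obj := o
  map {x y} u := (i x).inv ≫ T.map u ≫ (i y).hom
  map_id x := by simp
  map_comp {x y z} u v := by simp

lemma copyFun_mono (T : K ⥤ A) (hT : MonoValued T) (o : K → A) (i : ∀ x, T.obj x ≅ o x) :
    MonoValued (copyFun T o i) := by
  intro x y u
  show Mono ((i x).inv ≫ T.map u ≫ (i y).hom)
  haveI := hT u
  infer_instance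

open Classical in
noncomputable def G2obj (T : K ⥤ A) (A0 : A) (x : K) : A :=
  if x = bot then A0 else T.obj x

open Classical in
noncomputable def G2i (T : K ⥤ A) {A0 : A} (e : A0 ≅ T.obj bot) (x : K) :
    T.obj x ≅ G2obj (bot := bot) T A0 x :=
  if h : x = bot then
    eqToIso (congrArg T.obj h) ≪≫ e.symm ≪≫
      eqToIso ((show G2obj (bot := bot) T A0 x = A0 from if_pos h).symm)
  else eqToIso ((show G2obj (bot := bot) T A0 x = T.obj x from if_neg h).symm)

@[simps]
noncomputable def copyIsoHom (T : K ⥤ A) (o : K → A) (i : ∀ x, T.obj x ≅ o x) :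
    T ⟶ copyFun T o i where
  app x := (i x).hom
  naturality {x y} u := by
    show T.map u ≫ (i y).hom = (i x).hom ≫ (i x).inv ≫ T.map u ≫ (i y).hom
    exact (Iso.hom_inv_id_assoc (i x) _).symm

include hbot in
lemma sq_of_opcart {F G : ObjectProperty.FullSubcategory (MonoValued (A := A) (K := K))} (φ : F ⟶ G)
    (hop : IsOpcartesian (Ev A K bot) φ) {x y : K} (u : x ⟶ y) :
    IsPushout (F.obj.map u) (φ.hom.app x) (φ.hom.app y) (G.obj.map u) := by
  let T : ObjectProperty.FullSubcategory (MonoValued (A := A) (K := K)) :=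
    ⟨PP hbot F.obj (φ.hom.app bot), PP_mono hbot F.obj F.property (φ.hom.app bot)⟩
  let φ' : F ⟶ T := ObjectProperty.homMk (PPinl hbot F.obj (φ.hom.app bot))
  have hsq : ∀ z : K, IsPushout (F.obj.map (hbot.to z)) (φ'.hom.app bot) (φ'.hom.app z)
      (T.obj.map (hbot.to z)) := fun z => PP_sq hbot F.obj (φ.hom.app bot) z
  have hop' : IsOpcartesian (Ev A K bot) φ' := opcart_of_sq hbot φ' hsq
  obtain ⟨α, ⟨hα1, hα2⟩, hαu⟩ := hop T φ' (PPebot hbot F.obj (φ.hom.app bot)).hom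
    (PPinl_app_bot hbot F.obj (φ.hom.app bot))
  obtain ⟨β, ⟨hβ1, hβ2⟩, hβu⟩ := hop' G φ (PPebot hbot F.obj (φ.hom.app bot)).inv (by
    show φ.hom.app bot = φ'.hom.app bot ≫ _
    rw [show φ'.hom.app bot = _ from PPinl_app_bot hbot F.obj (φ.hom.app bot), Category.assoc,
      Iso.hom_inv_id, Category.comp_id])
  have hα2' : α.hom.app bot = (PPebot hbot F.obj (φ.hom.app bot)).hom := hα2
  have hβ2' : β.hom.app bot = (PPebot hbot F.obj (φ.hom.app bot)).inv := hβ2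
  have h1 : α ≫ β = 𝟙 G := by
    obtain ⟨γ, hγ, hγu⟩ := hop G φ (𝟙 _) (by
      show φ.hom.app bot = φ.hom.app bot ≫ 𝟙 _
      rw [Category.comp_id])
    have e1 : α ≫ β = γ := hγu _ ⟨by rw [← Category.assoc, hα1, hβ1], by
      show α.hom.app bot ≫ β.hom.app bot = 𝟙 _
      rw [hα2', hβ2', Iso.hom_inv_id]⟩
    have e2 : 𝟙 G = γ := hγu _ ⟨Category.comp_id φ, by rw [CategoryTheory.Functor.map_id]⟩
    rw [e1, e2]
  have h2 : β ≫ α = 𝟙 T := by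
    obtain ⟨γ, hγ, hγu⟩ := hop' T φ' (𝟙 _) (by
      show φ'.hom.app bot = φ'.hom.app bot ≫ 𝟙 _
      rw [Category.comp_id])
    have e1 : β ≫ α = γ := hγu _ ⟨by rw [← Category.assoc, hβ1, hα1], by
      show β.hom.app bot ≫ α.hom.app bot = 𝟙 _
      rw [hβ2', hα2', Iso.inv_hom_id]⟩
    have e2 : 𝟙 T = γ := hγu _ ⟨Category.comp_id φ', by rw [CategoryTheory.Functor.map_id]⟩
    rw [e1, e2]
  have h1x : ∀ z : K, α.hom.app z ≫ β.hom.app z = 𝟙 (G.obj.obj z) :=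
    fun z => congr_arg (fun t => NatTrans.app t.hom z) h1
  have h2x : ∀ z : K, β.hom.app z ≫ α.hom.app z = 𝟙 (T.obj.obj z) :=
    fun z => congr_arg (fun t => NatTrans.app t.hom z) h2
  refine (sq_all hbot φ'.hom hsq u).of_iso (Iso.refl _) (Iso.refl _)
    ⟨β.hom.app x, α.hom.app x, h2x x, h1x x⟩ ⟨β.hom.app y, α.hom.app y, h2x y, h1x y⟩ (by simp) ?_ ?_ ?_
  · show φ'.hom.app x ≫ β.hom.app x = (Iso.refl _).hom ≫ φ.hom.app x
    rw [Iso.refl_hom, Category.id_comp]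
    exact congr_arg (fun t => NatTrans.app t.hom x) hβ1
  · show φ'.hom.app y ≫ β.hom.app y = (Iso.refl _).hom ≫ φ.hom.app y
    rw [Iso.refl_hom, Category.id_comp]
    exact congr_arg (fun t => NatTrans.app t.hom y) hβ1
  · exact β.hom.naturality u


end Stmt17Aux

open Stmt17Aux in
/-- Let `A` be abelian and `K` a category with initial object `⊥`.  Then evaluation at `⊥`,
restricted to the full subcategory `Fun^mono(K,A)` of functors landing in monomorphisms, is
a Grothendieck opfibration, and a morphism `φ` there is opcartesian if and only if every
naturality square of `φ` is a pushout square in `A`. -/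
theorem stmt17 {A K : Type*} [Category A] [Category K] [Abelian A]
    (bot : K) (hbot : IsInitial bot) :
    IsOpfibration
      (ObjectProperty.ι (MonoValued (A := A) (K := K)) ⋙ (evaluation K A).obj bot) ∧
      ∀ (F G : ObjectProperty.FullSubcategory (MonoValued (A := A) (K := K))) (φ : F ⟶ G),
        IsOpcartesian
            (ObjectProperty.ι (MonoValued (A := A) (K := K)) ⋙
              (evaluation K A).obj bot) φ ↔
          ∀ ⦃x y : K⦄ (u : x ⟶ y),
            IsPushout (F.obj.map u)
              (((ObjectProperty.ι (MonoValued (A := A) (K := K))).map φ).app x)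
              (((ObjectProperty.ι (MonoValued (A := A) (K := K))).map φ).app y)
              (G.obj.map u) := by
  constructor
  · intro F A0 f
    let T : K ⥤ A := PP hbot F.obj f
    let e : A0 ≅ T.obj bot := PPebot hbot F.obj f
    let i : ∀ x, T.obj x ≅ G2obj (bot := bot) T A0 x := G2i (bot := bot) T e
    let G2 : ObjectProperty.FullSubcategory (MonoValued (A := A) (K := K)) :=
      ⟨copyFun T (G2obj (bot := bot) T A0) i,
        copyFun_mono T (PP_mono hbot F.obj F.property f) _ i⟩
    have hobot : G2obj (bot := bot) T A0 bot = A0 := if_pos rfl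
    let φ'' : F ⟶ G2 := ObjectProperty.homMk (
      PPinl hbot F.obj f ≫ copyIsoHom T (G2obj (bot := bot) T A0) i)
    have hsq'' : ∀ z : K, IsPushout (F.obj.map (hbot.to z)) (φ''.hom.app bot) (φ''.hom.app z)
        (G2.obj.map (hbot.to z)) := by
      intro z
      refine (PP_sq hbot F.obj f z).of_iso (Iso.refl _) (Iso.refl _) (i bot) (i z)
        (by simp) ?_ ?_ ?_
      · show _ ≫ _ = (Iso.refl _).hom ≫ φ''.hom.app bot
        rw [Iso.refl_hom, Category.id_comp]
        rfl
      · show _ ≫ _ = (Iso.refl _).hom ≫ φ''.hom.app z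
        rw [Iso.refl_hom, Category.id_comp]
        rfl
      · show T.map (hbot.to z) ≫ (i z).hom = (i bot).hom ≫ (copyFun T _ i).map (hbot.to z)
        simp
    refine ⟨G2, φ'', hobot, opcart_of_sq hbot φ'' hsq'', ?_⟩
    show ((PPinl hbot F.obj f).app bot ≫ (i bot).hom) ≫ eqToHom hobot = f
    rw [PPinl_app_bot hbot F.obj f]
    have hib : (i bot).hom ≫ eqToHom hobot = e.inv := by
      show (G2i (bot := bot) T e bot).hom ≫ eqToHom hobot = e.inv
      rw [G2i, dif_pos rfl]
      simp
    rw [Category.assoc, Category.assoc, hib, Iso.hom_inv_id, Category.comp_id]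
  · intro F G φ
    constructor
    · intro hop x y u
      exact sq_of_opcart hbot φ hop u
    · intro hsq
      exact opcart_of_sq hbot φ (fun x => hsq (hbot.to x))
end
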